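/- The sequence κ(n)/βⁿ tends to 0 as n → ∞. -/

import Mathlib

open MeasureTheory Set

/-- The greedy β-transformation with deleted digit set `{0, a₁, a₂}`:
`T x = βx` on `Δ(0) = [0, a₁/β)`, `T x = βx − a₁` on `Δ(a₁) = [a₁/β, a₂/β)`,
and `T x = βx − a₂` on `Δ(a₂) = [a₂/β, a₁)`. -/
noncomputable def greedyT (β a₁ a₂ : ℝ) (x : ℝ) : ℝ :=
  if x < a₁ / β then β * x
  else if x < a₂ / β then β * x - a₁
  else β * x - a₂

/-- The interval `Δ(b)` associated to a digit `b ∈ {0, a₁, a₂}`. -/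
noncomputable def digitInt (β a₁ a₂ : ℝ) (b : ℝ) : Set ℝ :=
  if b = 0 then Set.Ico 0 (a₁ / β)
  else if b = a₁ then Set.Ico (a₁ / β) (a₂ / β)
  else Set.Ico (a₂ / β) a₁

/-- The fundamental interval `Δ(w) = ⋂_{k < n} T⁻ᵏ Δ(b_k)` of a word
`w = (b₀, …, b_{n−1})`. -/
noncomputable def cyl (β a₁ a₂ : ℝ) (w : List ℝ) : Set ℝ :=
  ⋂ k ∈ Finset.range w.length,
    (greedyT β a₁ a₂)^[k] ⁻¹' digitInt β a₁ a₂ (w.getD k 0)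

/-- `w` is a word over the alphabet `A = {0, a₁, a₂}`. -/
def isWord (a₁ a₂ : ℝ) (w : List ℝ) : Prop := ∀ b ∈ w, b = 0 ∨ b = a₁ ∨ b = a₂

/-- The fundamental interval `Δ(w)` is full: `λ(Δ(w)) = a₁/β^|w|`. -/
def isFull (β a₁ a₂ : ℝ) (w : List ℝ) : Prop :=
  volume (cyl β a₁ a₂ w) = ENNReal.ofReal (a₁ / β ^ w.length)

/-- Condition (6): `a₁ · max (β−1) 1 < a₂ < a₁ · min 2 β`. -/
def condition6 (β a₁ a₂ : ℝ) : Prop :=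
  a₁ * max (β - 1) 1 < a₂ ∧ a₂ < a₁ * min 2 β

/-- `w ∈ Bₙ`: `w` is a word of length `n` over `A` with `λ(Δ(w)) > 0`, `Δ(w)`
non-full, and `Δ(w′)` non-full for every nonempty proper prefix `w′` of `w`. -/
def memB (β a₁ a₂ : ℝ) (n : ℕ) (w : List ℝ) : Prop :=
  w.length = n ∧ isWord a₁ a₂ w ∧ 0 < volume (cyl β a₁ a₂ w) ∧
    ¬ isFull β a₁ a₂ w ∧
    ∀ w' : List ℝ, w' ≠ [] → w' <+: w → w' ≠ w → ¬ isFull β a₁ a₂ w'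

/-- `κ(n)`: the number of elements of `Bₙ`. -/
noncomputable def kappa (β a₁ a₂ : ℝ) (n : ℕ) : ℕ :=
  {w : List ℝ | memB β a₁ a₂ n w}.ncard

namespace Aux9

structure Gd (β a₁ a₂ : ℝ) : Prop where
  hβ : 1 < β
  h1 : 0 < a₁
  h12 : a₁ < a₂
  h2 : a₂ < 2 * a₁
  hb : a₂ < β * a₁
  hb1 : a₁ * (β - 1) < a₂

variable {β a₁ a₂ : ℝ}

lemma Gd.hβ0 (h : Gd β a₁ a₂) : (0:ℝ) < β := lt_trans one_pos h.hβ
lemma Gd.ha2 (h : Gd β a₁ a₂) : (0:ℝ) < a₂ := lt_trans h.h1 h.h12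

/-- `cylc c w`: the cylinder of `w` inside the "interval" `[0, c)`. -/
noncomputable def cylc (β a₁ a₂ c : ℝ) (w : List ℝ) : Set ℝ :=
  Set.Ico 0 c ∩ ⋂ k ∈ Finset.range w.length,
    (greedyT β a₁ a₂)^[k] ⁻¹' digitInt β a₁ a₂ (w.getD k 0)

lemma mem_cylc {c x : ℝ} {w : List ℝ} :
    x ∈ cylc β a₁ a₂ c w ↔ (0 ≤ x ∧ x < c) ∧
      ∀ k < w.length, (greedyT β a₁ a₂)^[k] x ∈ digitInt β a₁ a₂ (w.getD k 0) := by
  simp [cylc, Set.mem_Ico]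

lemma cylc_nil {c : ℝ} : cylc β a₁ a₂ c [] = Set.Ico 0 c := by
  simp [cylc]

lemma cylc_anti {c : ℝ} {w w' : List ℝ} (hp : w' <+: w) :
    cylc β a₁ a₂ c w ⊆ cylc β a₁ a₂ c w' := by
  intro x hx
  rw [mem_cylc] at hx ⊢
  obtain ⟨t, rfl⟩ := hp
  refine ⟨hx.1, fun k hk => ?_⟩
  have := hx.2 k (by simp; omega)
  rwa [List.getD_append _ _ _ _ hk] at this

lemma measurable_greedyT : Measurable (greedyT β a₁ a₂) := by
  unfold greedyT
  refine Measurable.ite (measurableSet_lt measurable_id measurable_const)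
    (measurable_const.mul measurable_id) ?_
  exact Measurable.ite (measurableSet_lt measurable_id measurable_const)
    ((measurable_const.mul measurable_id).sub measurable_const)
    ((measurable_const.mul measurable_id).sub measurable_const)

lemma measurableSet_digitInt {b : ℝ} : MeasurableSet (digitInt β a₁ a₂ b) := by
  unfold digitInt; split_ifs <;> exact measurableSet_Ico

lemma measurableSet_cylc {c : ℝ} {w : List ℝ} : MeasurableSet (cylc β a₁ a₂ c w) := by
  refine measurableSet_Ico.inter (MeasurableSet.biInter (Set.to_countable _) fun k _ => ?_)
  exact (measurable_greedyT.iterate k) measurableSet_digitInt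

lemma vol_preimage_affine (hβ : (0:ℝ) < β) (b : ℝ) (s : Set ℝ) :
    volume ((fun x => β * x - b) ⁻¹' s) = (ENNReal.ofReal β)⁻¹ * volume s := by
  have hfe : (fun x : ℝ => β * x - b) = (fun y : ℝ => y + (-b)) ∘ (fun x : ℝ => β * x) := by
    funext x; simp [sub_eq_add_neg]
  rw [hfe, Set.preimage_comp]
  rw [Real.volume_preimage_mul_left (ne_of_gt hβ)]
  rw [measure_preimage_add_right]
  congr 1
  rw [abs_of_pos (inv_pos.2 hβ), ENNReal.ofReal_inv_of_pos hβ]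

lemma cylc_cons (hβ : (0:ℝ) < β) {b l r : ℝ} (hl0 : 0 ≤ l) (hlb : β * l = b)
    (hdig : digitInt β a₁ a₂ b = Set.Ico l r)
    (hT : ∀ x ∈ Set.Ico l r, greedyT β a₁ a₂ x = β * x - b)
    (c : ℝ) (w : List ℝ) :
    cylc β a₁ a₂ c (b :: w) =
      (fun x => β * x - b) ⁻¹' cylc β a₁ a₂ (β * min c r - b) w := by
  ext x
  simp only [mem_cylc, Set.mem_preimage]
  constructor
  · rintro ⟨⟨hx0, hxc⟩, hk⟩
    have hxd : x ∈ Set.Ico l r := by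
      have h0 := hk 0 (Nat.succ_pos _)
      rw [Function.iterate_zero_apply] at h0
      simpa [hdig] using h0
    have hTx : greedyT β a₁ a₂ x = β * x - b := hT x hxd
    have hmin : x < min c r := lt_min hxc hxd.2
    refine ⟨⟨by nlinarith [hxd.1], by nlinarith⟩, fun k hk' => ?_⟩
    have h2 := hk (k+1) (by simpa using Nat.succ_lt_succ hk')
    rw [Function.iterate_succ_apply, hTx] at h2
    simpa using h2
  · rintro ⟨⟨h0, hc'⟩, hk⟩
    have hxl : l ≤ x := by nlinarith
    have hxmin : x < min c r := by nlinarith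
    have hxd : x ∈ Set.Ico l r := ⟨hxl, lt_of_lt_of_le hxmin (min_le_right _ _)⟩
    have hTx : greedyT β a₁ a₂ x = β * x - b := hT x hxd
    refine ⟨⟨le_trans hl0 hxl, lt_of_lt_of_le hxmin (min_le_left _ _)⟩, fun k hkk => ?_⟩
    match k with
    | 0 => rw [Function.iterate_zero_apply]; simpa [hdig] using hxd
    | (k+1) =>
      rw [Function.iterate_succ_apply, hTx]
      have := hk k (by simp only [List.length_cons] at hkk; omega)
      simpa using this

lemma vol_cylc_cons (hβ : (0:ℝ) < β) {b l r : ℝ} (hl0 : 0 ≤ l) (hlb : β * l = b)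
    (hdig : digitInt β a₁ a₂ b = Set.Ico l r)
    (hT : ∀ x ∈ Set.Ico l r, greedyT β a₁ a₂ x = β * x - b)
    (c : ℝ) (w : List ℝ) :
    volume (cylc β a₁ a₂ c (b :: w)) =
      (ENNReal.ofReal β)⁻¹ * volume (cylc β a₁ a₂ (β * min c r - b) w) := by
  rw [cylc_cons hβ hl0 hlb hdig hT, vol_preimage_affine hβ]

lemma ennreal_scale (hβ : (0:ℝ) < β) (x : ℝ) :
    (ENNReal.ofReal β)⁻¹ * ENNReal.ofReal x = ENNReal.ofReal (x / β) := by
  rw [ENNReal.ofReal_div_of_pos hβ, ENNReal.div_eq_inv_mul]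

lemma scale_pos (hβ : (0:ℝ) < β) {V : ENNReal} :
    0 < (ENNReal.ofReal β)⁻¹ * V ↔ 0 < V := by
  have h1 : (ENNReal.ofReal β)⁻¹ ≠ 0 := ENNReal.inv_ne_zero.2 ENNReal.ofReal_ne_top
  simp [pos_iff_ne_zero, h1]

lemma scale_inj (hβ : (0:ℝ) < β) {V W : ENNReal} :
    (ENNReal.ofReal β)⁻¹ * V = (ENNReal.ofReal β)⁻¹ * W ↔ V = W := by
  have h0 : (ENNReal.ofReal β)⁻¹ ≠ 0 := ENNReal.inv_ne_zero.2 ENNReal.ofReal_ne_top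
  have ht : (ENNReal.ofReal β)⁻¹ ≠ ⊤ :=
    ENNReal.inv_ne_top.2 (ne_of_gt (ENNReal.ofReal_pos.2 hβ))
  exact ENNReal.mul_right_inj h0 ht

/-- The state dynamics. -/
noncomputable def gmap (β a₁ a₂ c : ℝ) : ℝ :=
  if c < a₁/β then β*c else if c ≤ a₂/β then β*c - a₁ else β*c - a₂

/-- membership in the renormalized `Bₙ` started from `[0,c)`. -/
def memC (β a₁ a₂ c : ℝ) (n : ℕ) (w : List ℝ) : Prop :=
  w.length = n ∧ isWord a₁ a₂ w ∧ 0 < volume (cylc β a₁ a₂ c w) ∧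
    ∀ w' : List ℝ, w' ≠ [] → w' <+: w →
      volume (cylc β a₁ a₂ c w') ≠ ENNReal.ofReal (a₁ / β ^ w'.length)

noncomputable def Kc (β a₁ a₂ c : ℝ) (n : ℕ) : ℕ := {w : List ℝ | memC β a₁ a₂ c n w}.ncard

section digits
variable (h : Gd β a₁ a₂)
include h

omit h in
lemma dig0_eq : digitInt β a₁ a₂ 0 = Set.Ico 0 (a₁/β) := by simp [digitInt]

lemma dig1_eq : digitInt β a₁ a₂ a₁ = Set.Ico (a₁/β) (a₂/β) := by
  rw [digitInt, if_neg (ne_of_gt h.h1), if_pos rfl]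

lemma dig2_eq : digitInt β a₁ a₂ a₂ = Set.Ico (a₂/β) a₁ := by
  rw [digitInt, if_neg (ne_of_gt h.ha2), if_neg (ne_of_gt h.h12)]

omit h in
lemma T0_eq : ∀ x ∈ Set.Ico 0 (a₁/β), greedyT β a₁ a₂ x = β * x - 0 := by
  intro x hx; rw [greedyT, if_pos hx.2]; ring

omit h in
lemma T1_eq : ∀ x ∈ Set.Ico (a₁/β) (a₂/β), greedyT β a₁ a₂ x = β * x - a₁ := by
  intro x hx; rw [greedyT, if_neg (not_lt.2 hx.1), if_pos hx.2]

lemma T2_eq : ∀ x ∈ Set.Ico (a₂/β) a₁, greedyT β a₁ a₂ x = β * x - a₂ := by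
  intro x hx
  have h12 : a₁/β ≤ a₂/β := (div_le_div_iff_of_pos_right h.hβ0).2 h.h12.le
  rw [greedyT, if_neg (not_lt.2 (le_trans h12 hx.1)), if_neg (not_lt.2 hx.1)]

end digits

section digits2
variable (h : Gd β a₁ a₂)
include h

lemma vol_cons0 (c : ℝ) (w : List ℝ) :
    volume (cylc β a₁ a₂ c ((0:ℝ) :: w)) =
      (ENNReal.ofReal β)⁻¹ * volume (cylc β a₁ a₂ (β * min c (a₁/β) - 0) w) :=
  vol_cylc_cons h.hβ0 le_rfl (by ring) dig0_eq T0_eq c w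

lemma vol_cons1 (c : ℝ) (w : List ℝ) :
    volume (cylc β a₁ a₂ c (a₁ :: w)) =
      (ENNReal.ofReal β)⁻¹ * volume (cylc β a₁ a₂ (β * min c (a₂/β) - a₁) w) :=
  vol_cylc_cons h.hβ0 (by have := h.h1; have := h.hβ0; positivity) (by rw [mul_comm]; exact div_mul_cancel₀ _ (ne_of_gt h.hβ0)) (dig1_eq h) (T1_eq) c w

lemma vol_cons2 (c : ℝ) (w : List ℝ) :
    volume (cylc β a₁ a₂ c (a₂ :: w)) =
      (ENNReal.ofReal β)⁻¹ * volume (cylc β a₁ a₂ (β * min c a₁ - a₂) w) :=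
  vol_cylc_cons h.hβ0 (by have := h.ha2; have := h.hβ0; positivity) (by rw [mul_comm]; exact div_mul_cancel₀ _ (ne_of_gt h.hβ0))
    (dig2_eq h) (T2_eq h) c w

lemma vol_single0 (c : ℝ) :
    volume (cylc β a₁ a₂ c [(0:ℝ)]) = ENNReal.ofReal (min c (a₁/β)) := by
  rw [vol_cons0 h, cylc_nil, Real.volume_Ico, sub_zero, sub_zero, ennreal_scale h.hβ0]
  congr 1
  rw [mul_div_cancel_left₀ _ (ne_of_gt h.hβ0)]

lemma vol_single1 (c : ℝ) :
    volume (cylc β a₁ a₂ c [a₁]) = ENNReal.ofReal ((β * min c (a₂/β) - a₁)/β) := by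
  rw [vol_cons1 h, cylc_nil, Real.volume_Ico, sub_zero, ennreal_scale h.hβ0]

lemma vol_single2 (c : ℝ) :
    volume (cylc β a₁ a₂ c [a₂]) = ENNReal.ofReal ((β * min c a₁ - a₂)/β) := by
  rw [vol_cons2 h, cylc_nil, Real.volume_Ico, sub_zero, ennreal_scale h.hβ0]

end digits2

/-- generic tail lemma -/
lemma memC_cons_tail (hβ : (0:ℝ) < β) {b l r : ℝ} (hl0 : 0 ≤ l) (hlb : β * l = b)
    (hdig : digitInt β a₁ a₂ b = Set.Ico l r)
    (hT : ∀ x ∈ Set.Ico l r, greedyT β a₁ a₂ x = β * x - b)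
    (hbw : b = 0 ∨ b = a₁ ∨ b = a₂)
    {c : ℝ} {n : ℕ} {t : List ℝ}
    (hm : memC β a₁ a₂ c (n+1) (b :: t)) : memC β a₁ a₂ (β * min c r - b) n t := by
  obtain ⟨hlen, hword, hpos, hpre⟩ := hm
  refine ⟨by simpa using hlen, fun x hx => hword x (List.mem_cons_of_mem _ hx), ?_, ?_⟩
  · rw [vol_cylc_cons hβ hl0 hlb hdig hT] at hpos
    exact (scale_pos hβ).1 hpos
  · intro t' h1 h2 hfull
    refine hpre (b :: t') (by simp) (List.cons_prefix_cons.2 ⟨rfl, h2⟩) ?_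
    rw [vol_cylc_cons hβ hl0 hlb hdig hT, hfull, ennreal_scale hβ, List.length_cons,
      pow_succ, ← div_div]

section headcase
variable (h : Gd β a₁ a₂)
include h

lemma tail0 {c : ℝ} {n : ℕ} {t : List ℝ} (hm : memC β a₁ a₂ c (n+1) ((0:ℝ) :: t)) :
    memC β a₁ a₂ (β * min c (a₁/β) - 0) n t :=
  memC_cons_tail h.hβ0 le_rfl (by ring) dig0_eq T0_eq (Or.inl rfl) hm

lemma tail1 {c : ℝ} {n : ℕ} {t : List ℝ} (hm : memC β a₁ a₂ c (n+1) (a₁ :: t)) :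
    memC β a₁ a₂ (β * min c (a₂/β) - a₁) n t :=
  memC_cons_tail h.hβ0 (by have := h.h1; have := h.hβ0; positivity) (by rw [mul_comm]; exact div_mul_cancel₀ _ (ne_of_gt h.hβ0)) (dig1_eq h) T1_eq (Or.inr (Or.inl rfl)) hm

lemma tail2 {c : ℝ} {n : ℕ} {t : List ℝ} (hm : memC β a₁ a₂ c (n+1) (a₂ :: t)) :
    memC β a₁ a₂ (β * min c a₁ - a₂) n t :=
  memC_cons_tail h.hβ0 (by have := h.ha2; have := h.hβ0; positivity) (by rw [mul_comm]; exact div_mul_cancel₀ _ (ne_of_gt h.hβ0))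
    (dig2_eq h) (T2_eq h) (Or.inr (Or.inr rfl)) hm

lemma head_cases {c : ℝ} (hc : c ≤ a₁) {b : ℝ} {t : List ℝ} {n : ℕ}
    (hw : memC β a₁ a₂ c (n+1) (b :: t)) :
    (c < a₁/β ∧ b = 0 ∧ memC β a₁ a₂ (gmap β a₁ a₂ c) n t) ∨
    (a₁/β < c ∧ ¬ a₂/β < c ∧ b = a₁ ∧ memC β a₁ a₂ (gmap β a₁ a₂ c) n t) ∨
    (a₂/β < c ∧ ((b = a₁ ∧ memC β a₁ a₂ (a₂ - a₁) n t) ∨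
                 (b = a₂ ∧ memC β a₁ a₂ (gmap β a₁ a₂ c) n t))) := by
  have hβ0 := h.hβ0
  have hbmem : b = 0 ∨ b = a₁ ∨ b = a₂ := hw.2.1 b List.mem_cons_self
  have hpos1 : 0 < volume (cylc β a₁ a₂ c [b]) :=
    lt_of_lt_of_le hw.2.2.1 (measure_mono (cylc_anti ⟨t, rfl⟩))
  have hnf1 : volume (cylc β a₁ a₂ c [b]) ≠ ENNReal.ofReal (a₁/β) := by
    simpa using hw.2.2.2 [b] (by simp) ⟨t, rfl⟩
  rcases hbmem with hb | hb | hb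
  · -- b = 0
    rw [hb] at hnf1 hw
    have hlt : c < a₁/β := by
      by_contra hge
      exact hnf1 (by rw [vol_single0 h, min_eq_right (not_lt.1 hge)])
    have hst : β * min c (a₁/β) - 0 = gmap β a₁ a₂ c := by
      rw [min_eq_left hlt.le, gmap, if_pos hlt]; ring
    exact Or.inl ⟨hlt, hb, hst ▸ tail0 h hw⟩
  · -- b = a₁
    rw [hb] at hpos1 hw
    have hpos' : 0 < β * min c (a₂/β) - a₁ := by
      rw [vol_single1 h] at hpos1
      have hx := ENNReal.ofReal_pos.1 hpos1
      have hx2 := mul_pos hx hβ0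
      rwa [div_mul_cancel₀ _ (ne_of_gt hβ0)] at hx2
    have hgt : a₁/β < c := by
      have hmin : a₁/β < min c (a₂/β) := by
        rw [div_lt_iff₀ hβ0]
        nlinarith
      exact lt_of_lt_of_le hmin (min_le_left _ _)
    by_cases hbr : a₂/β < c
    · have hst : β * min c (a₂/β) - a₁ = a₂ - a₁ := by
        rw [min_eq_right hbr.le, mul_comm, div_mul_cancel₀ _ (ne_of_gt hβ0)]
      exact Or.inr (Or.inr ⟨hbr, Or.inl ⟨hb, hst ▸ tail1 h hw⟩⟩)
    · have hst : β * min c (a₂/β) - a₁ = gmap β a₁ a₂ c := by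
        rw [min_eq_left (not_lt.1 hbr), gmap, if_neg (not_lt.2 hgt.le), if_pos (not_lt.1 hbr)]
      exact Or.inr (Or.inl ⟨hgt, hbr, hb, hst ▸ tail1 h hw⟩)
  · -- b = a₂
    rw [hb] at hpos1 hw
    have hminc : min c a₁ = c := min_eq_left hc
    have hpos' : 0 < β * c - a₂ := by
      rw [vol_single2 h, hminc] at hpos1
      have hx := ENNReal.ofReal_pos.1 hpos1
      have hx2 := mul_pos hx hβ0
      rwa [div_mul_cancel₀ _ (ne_of_gt hβ0)] at hx2
    have hbr : a₂/β < c := by rw [div_lt_iff₀ hβ0]; nlinarith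
    have h12 : a₁/β ≤ a₂/β := by
      exact (div_le_div_iff_of_pos_right hβ0).2 h.h12.le
    have hst : β * min c a₁ - a₂ = gmap β a₁ a₂ c := by
      rw [hminc, gmap, if_neg (not_lt.2 (le_trans h12 hbr.le)), if_neg (not_le.2 hbr)]
    exact Or.inr (Or.inr ⟨hbr, Or.inr ⟨hb, hst ▸ tail2 h hw⟩⟩)

end headcase

lemma finite_words (s : Set ℝ) (hs : s.Finite) :
    ∀ n, {w : List ℝ | w.length = n ∧ ∀ b ∈ w, b ∈ s}.Finite
  | 0 => (Set.finite_singleton ([] : List ℝ)).subset (by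
      rintro w ⟨hl, -⟩; simp [List.length_eq_zero_iff.mp hl])
  | (n+1) => by
      refine (Set.Finite.image2 List.cons hs (finite_words s hs n)).subset ?_
      rintro w ⟨hl, hw⟩
      cases w with
      | nil => simp at hl
      | cons x t =>
        exact Set.mem_image2_of_mem (hw x (by simp))
          ⟨by simpa using hl, fun b hb => hw b (by simp [hb])⟩

lemma finite_memC {c : ℝ} {n : ℕ} : {w : List ℝ | memC β a₁ a₂ c n w}.Finite := by
  refine (finite_words {0,a₁,a₂} (Set.toFinite _) n).subset ?_
  rintro w hw
  exact ⟨hw.1, fun b hb => by rcases hw.2.1 b hb with h'|h'|h' <;> simp [h']⟩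

lemma Kc_zero_le {c : ℝ} : Kc β a₁ a₂ c 0 ≤ 1 := by
  have : {w : List ℝ | memC β a₁ a₂ c 0 w} ⊆ {([] : List ℝ)} := by
    rintro w hw
    simp [List.length_eq_zero_iff.mp hw.1]
  simpa [Kc] using Set.ncard_le_ncard this (Set.finite_singleton _)

lemma step (h : Gd β a₁ a₂) {c : ℝ} (hc : c ≤ a₁) (n : ℕ) :
    Kc β a₁ a₂ c (n+1) ≤ Kc β a₁ a₂ (gmap β a₁ a₂ c) n +
      (if a₂/β < c then Kc β a₁ a₂ (a₂ - a₁) n else 0) := by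
  classical
  by_cases hbr : a₂/β < c
  · have hsub : {w : List ℝ | memC β a₁ a₂ c (n+1) w} ⊆
        (List.cons a₁ '' {w | memC β a₁ a₂ (a₂ - a₁) n w}) ∪
        (List.cons a₂ '' {w | memC β a₁ a₂ (gmap β a₁ a₂ c) n w}) := by
      rintro w hw
      obtain ⟨b, t, rfl⟩ : ∃ b t, w = b :: t := by
        cases w with
        | nil => exact absurd hw.1 (by simp)
        | cons b t => exact ⟨_, _, rfl⟩
      rcases head_cases h hc hw with ⟨hn, _⟩ | ⟨_, hn, _⟩ | ⟨_, hcase⟩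
      · exfalso
        have h12 : a₁/β ≤ a₂/β := (div_le_div_iff_of_pos_right h.hβ0).2 h.h12.le
        linarith
      · exact absurd hbr hn
      · rcases hcase with ⟨rfl, ht⟩ | ⟨rfl, ht⟩
        · exact Or.inl ⟨t, ht, rfl⟩
        · exact Or.inr ⟨t, ht, rfl⟩
    rw [if_pos hbr]
    calc Kc β a₁ a₂ c (n+1)
        ≤ ((List.cons a₁ '' {w | memC β a₁ a₂ (a₂ - a₁) n w}) ∪
           (List.cons a₂ '' {w | memC β a₁ a₂ (gmap β a₁ a₂ c) n w})).ncard :=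
          Set.ncard_le_ncard hsub ((finite_memC.image _).union (finite_memC.image _))
      _ ≤ (List.cons a₁ '' {w | memC β a₁ a₂ (a₂ - a₁) n w}).ncard +
          (List.cons a₂ '' {w | memC β a₁ a₂ (gmap β a₁ a₂ c) n w}).ncard :=
          Set.ncard_union_le _ _
      _ = Kc β a₁ a₂ (a₂ - a₁) n + Kc β a₁ a₂ (gmap β a₁ a₂ c) n := by
          rw [Set.ncard_image_of_injective _ (List.cons_injective),
            Set.ncard_image_of_injective _ (List.cons_injective)]; rfl
      _ = _ := add_comm _ _
  · obtain ⟨b0, hb0⟩ : ∃ b0 : ℝ, {w : List ℝ | memC β a₁ a₂ c (n+1) w} ⊆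
        List.cons b0 '' {w | memC β a₁ a₂ (gmap β a₁ a₂ c) n w} := by
      by_cases hlt : c < a₁/β
      · refine ⟨0, ?_⟩
        rintro w hw
        obtain ⟨b, t, rfl⟩ : ∃ b t, w = b :: t := by
          cases w with
          | nil => exact absurd hw.1 (by simp)
          | cons b t => exact ⟨_, _, rfl⟩
        rcases head_cases h hc hw with ⟨_, rfl, ht⟩ | ⟨hgt, _, _⟩ | ⟨hbr2, _⟩
        · exact ⟨t, ht, rfl⟩
        · exact absurd hlt (not_lt.2 hgt.le)
        · exact absurd hbr2 hbr
      · refine ⟨a₁, ?_⟩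
        rintro w hw
        obtain ⟨b, t, rfl⟩ : ∃ b t, w = b :: t := by
          cases w with
          | nil => exact absurd hw.1 (by simp)
          | cons b t => exact ⟨_, _, rfl⟩
        rcases head_cases h hc hw with ⟨hlt2, _, _⟩ | ⟨_, _, rfl, ht⟩ | ⟨hbr2, _⟩
        · exact absurd hlt2 hlt
        · exact ⟨t, ht, rfl⟩
        · exact absurd hbr2 hbr
    rw [if_neg hbr, add_zero]
    calc Kc β a₁ a₂ c (n+1)
        ≤ (List.cons b0 '' {w | memC β a₁ a₂ (gmap β a₁ a₂ c) n w}).ncard :=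
          Set.ncard_le_ncard hb0 (finite_memC.image _)
      _ = Kc β a₁ a₂ (gmap β a₁ a₂ c) n := by
          rw [Set.ncard_image_of_injective _ (List.cons_injective)]; rfl

lemma gmap_mem (h : Gd β a₁ a₂) {c : ℝ} (hc : c ∈ Set.Icc 0 a₁) :
    gmap β a₁ a₂ c ∈ Set.Icc 0 a₁ := by
  have hβ0 := h.hβ0
  have h1 := h.h1
  have h12 := h.h12
  have h2 := h.h2
  have hb := h.hb
  have hb1 := h.hb1
  obtain ⟨hc0, hc1⟩ := hc
  rw [gmap]
  split_ifs with e1 e2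
  · constructor
    · positivity
    · rw [lt_div_iff₀ hβ0] at e1; nlinarith
  · rw [not_lt, div_le_iff₀ hβ0] at e1
    rw [le_div_iff₀ hβ0] at e2
    constructor <;> nlinarith
  · rw [not_lt, div_le_iff₀ hβ0] at e1
    rw [not_le, div_lt_iff₀ hβ0] at e2
    constructor <;> nlinarith

lemma lemR (h : Gd β a₁ a₂) :
    ∀ (n : ℕ) (c : ℝ), c ∈ Set.Icc 0 a₁ →
      Kc β a₁ a₂ c n ≤ 1 + ∑ t ∈ Finset.range n,
        (if a₂/β < (gmap β a₁ a₂)^[t] c then Kc β a₁ a₂ (a₂ - a₁) (n-1-t) else 0)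
  | 0, c, hc => by simpa using Kc_zero_le
  | (n+1), c, hc => by
    classical
    have ih := lemR h n (gmap β a₁ a₂ c) (gmap_mem h hc)
    have hstep := step h hc.2 n
    have hsum : ∑ t ∈ Finset.range (n+1),
        (if a₂/β < (gmap β a₁ a₂)^[t] c then Kc β a₁ a₂ (a₂ - a₁) (n+1-1-t) else 0)
      = (∑ t ∈ Finset.range n,
          (if a₂/β < (gmap β a₁ a₂)^[t] (gmap β a₁ a₂ c) then Kc β a₁ a₂ (a₂ - a₁) (n-1-t) else 0))
        + (if a₂/β < c then Kc β a₁ a₂ (a₂ - a₁) n else 0) := by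
      rw [Finset.sum_range_succ']
      congr 1
      refine Finset.sum_congr rfl fun t ht => ?_
      have he : n+1-1-(t+1) = n-1-t := by omega
      rw [Function.iterate_succ_apply, he]
    calc Kc β a₁ a₂ c (n+1)
        ≤ Kc β a₁ a₂ (gmap β a₁ a₂ c) n + (if a₂/β < c then Kc β a₁ a₂ (a₂ - a₁) n else 0) :=
          hstep
      _ ≤ (1 + ∑ t ∈ Finset.range n,
            (if a₂/β < (gmap β a₁ a₂)^[t] (gmap β a₁ a₂ c) then Kc β a₁ a₂ (a₂ - a₁) (n-1-t) else 0))
          + (if a₂/β < c then Kc β a₁ a₂ (a₂ - a₁) n else 0) := add_le_add_left ih _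
      _ = 1 + ∑ t ∈ Finset.range (n+1),
            (if a₂/β < (gmap β a₁ a₂)^[t] c then Kc β a₁ a₂ (a₂ - a₁) (n+1-1-t) else 0) := by
          rw [hsum, add_assoc]

/-- The branching weight. -/
noncomputable def wt (β a₁ a₂ c : ℝ) (t : ℕ) : ℝ :=
  if a₂/β < (gmap β a₁ a₂)^[t] c then ((β:ℝ)^(t+1))⁻¹ else 0

lemma wt_nonneg (h : Gd β a₁ a₂) (c : ℝ) (t : ℕ) : 0 ≤ wt β a₁ a₂ c t := by
  have := h.hβ0
  unfold wt; split_ifs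
  · positivity
  · exact le_rfl

lemma orbit_mem (h : Gd β a₁ a₂) : ∀ (k : ℕ) {c : ℝ}, c ∈ Set.Icc 0 a₁ →
    (gmap β a₁ a₂)^[k] c ∈ Set.Icc 0 a₁
  | 0, _, hc => hc
  | (k+1), c, hc => by
    rw [Function.iterate_succ_apply]
    exact orbit_mem h k (gmap_mem h hc)

lemma weight_sum (h : Gd β a₁ a₂) :
    ∀ (n : ℕ) (c : ℝ), c ∈ Set.Icc 0 a₁ →
      a₂ * ∑ t ∈ Finset.range n, wt β a₁ a₂ c t ≤ c
  | 0, c, hc => by simpa using hc.1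
  | (n+1), c, hc => by
    have hβ0 := h.hβ0
    have hshift : ∀ t : ℕ, wt β a₁ a₂ c (t+1) = β⁻¹ * wt β a₁ a₂ (gmap β a₁ a₂ c) t := by
      intro t
      unfold wt
      rw [Function.iterate_succ_apply]
      split_ifs
      · rw [pow_succ _ (t+1), mul_inv_rev]
      · rw [mul_zero]
    rw [Finset.sum_range_succ']
    simp only [hshift]
    rw [← Finset.mul_sum]
    have hwt0 : wt β a₁ a₂ c 0 = if a₂/β < c then β⁻¹ else 0 := by
      unfold wt; rw [Function.iterate_zero_apply, pow_one]
    rw [hwt0]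
    have ih := weight_sum h n (gmap β a₁ a₂ c) (gmap_mem h hc)
    have hkey := mul_le_mul_of_nonneg_left ih (inv_nonneg.2 hβ0.le)
    by_cases hbr : a₂/β < c
    · rw [if_pos hbr]
      have hg : gmap β a₁ a₂ c = β*c - a₂ := by
        have h12 : a₁/β ≤ a₂/β := (div_le_div_iff_of_pos_right hβ0).2 h.h12.le
        rw [gmap, if_neg (not_lt.2 (le_trans h12 hbr.le)), if_neg (not_le.2 hbr)]
      have hexp : β⁻¹ * (gmap β a₁ a₂ c) = c - β⁻¹ * a₂ := by
        rw [hg]; field_simp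
      linarith
    · rw [if_neg hbr]
      have hkey2 : β⁻¹ * (a₂ * ∑ t ∈ Finset.range n, wt β a₁ a₂ (gmap β a₁ a₂ c) t)
          ≤ β⁻¹ * (β * c) := by
        refine le_trans hkey (mul_le_mul_of_nonneg_left ?_ (inv_nonneg.2 hβ0.le))
        have h1 := h.h1; have h2 := h.ha2
        rw [gmap]; split_ifs <;> linarith
      have hexp : β⁻¹ * (β * c) = c := by field_simp
      rw [hexp] at hkey2
      linarith

lemma weight_head (h : Gd β a₁ a₂) (n : ℕ) {c : ℝ} (hc : c ∈ Set.Icc 0 a₁) :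
    ∑ t ∈ Finset.range n, wt β a₁ a₂ c t ≤ a₁/a₂ := by
  rw [le_div_iff₀ h.ha2]
  have := weight_sum h n c hc
  have := hc.2
  linarith

lemma weight_tail (h : Gd β a₁ a₂) {c : ℝ} (hc : c ∈ Set.Icc 0 a₁) (k n : ℕ) :
    ∑ t ∈ Finset.Ico k n, wt β a₁ a₂ c t ≤ (β^k)⁻¹ * (a₁/a₂) := by
  have hβ0 := h.hβ0
  rcases le_or_gt k n with hkn | hkn
  · rw [Finset.sum_Ico_eq_sum_range]
    have hsh : ∀ j : ℕ, wt β a₁ a₂ c (k+j) =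
        (β^k)⁻¹ * wt β a₁ a₂ ((gmap β a₁ a₂)^[k] c) j := by
      intro j
      unfold wt
      rw [add_comm k j, Function.iterate_add_apply]
      split_ifs
      · rw [(by omega : j+k+1 = k+(j+1)), pow_add, mul_inv_rev]
        ring
      · rw [mul_zero]
    simp only [hsh]
    rw [← Finset.mul_sum]
    refine mul_le_mul_of_nonneg_left ?_ (by positivity)
    exact weight_head h _ (orbit_mem h k hc)
  · rw [Finset.Ico_eq_empty (by omega)]
    have := h.h1.le; have := h.ha2
    simp
    positivity

lemma recR (h : Gd β a₁ a₂) {c : ℝ} (hc : c ∈ Set.Icc 0 a₁) (n : ℕ) :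
    (Kc β a₁ a₂ c n : ℝ)/β^n ≤ (β^n)⁻¹ + ∑ t ∈ Finset.range n,
      wt β a₁ a₂ c t * ((Kc β a₁ a₂ (a₂-a₁) (n-1-t) : ℝ)/β^(n-1-t)) := by
  have hβ0 := h.hβ0
  have hcast : (Kc β a₁ a₂ c n : ℝ) ≤ 1 + ∑ t ∈ Finset.range n,
      (if a₂/β < (gmap β a₁ a₂)^[t] c then (Kc β a₁ a₂ (a₂-a₁) (n-1-t) : ℝ) else 0) := by
    have hn := lemR h n c hc
    calc (Kc β a₁ a₂ c n : ℝ)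
        ≤ ((1 + ∑ t ∈ Finset.range n,
            (if a₂/β < (gmap β a₁ a₂)^[t] c then Kc β a₁ a₂ (a₂ - a₁) (n-1-t) else 0) : ℕ) : ℝ) :=
          Nat.cast_le.2 hn
      _ = _ := by push_cast; rfl
  refine le_trans ((div_le_div_iff_of_pos_right (pow_pos hβ0 n)).2 hcast) ?_
  rw [add_div, Finset.sum_div]
  refine add_le_add (le_of_eq (one_div _)) (le_of_eq (Finset.sum_congr rfl fun t ht => ?_))
  rcases Finset.mem_range.1 ht with ht'
  unfold wt
  split_ifs with hbr
  · have hsplit : (β:ℝ)^n = β^(t+1) * β^(n-1-t) := by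
      rw [← pow_add]
      congr 1
      omega
    rw [hsplit, div_mul_eq_div_div_swap, div_eq_inv_mul]
  · simp

section endgame
variable (h : Gd β a₁ a₂)
include h

lemma U_bound : ∀ n : ℕ, (Kc β a₁ a₂ (a₂-a₁) n : ℝ)/β^n ≤ (1 - a₁/a₂)⁻¹ := by
  have hβ0 := h.hβ0
  have hs1 : a₁/a₂ < 1 := (div_lt_one h.ha2).2 h.h12
  have hs0 : 0 ≤ a₁/a₂ := div_nonneg h.h1.le h.ha2.le
  have hC0 : (0:ℝ) < (1 - a₁/a₂)⁻¹ := inv_pos.2 (by linarith)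
  have ha : (a₂ - a₁) ∈ Set.Icc 0 a₁ := ⟨by linarith [h.h12], by linarith [h.h2]⟩
  intro n
  induction n using Nat.strong_induction_on with
  | _ n ih =>
  have hrec := recR h ha n
  have hsum : ∑ t ∈ Finset.range n, wt β a₁ a₂ (a₂-a₁) t *
      ((Kc β a₁ a₂ (a₂-a₁) (n-1-t) : ℝ)/β^(n-1-t))
      ≤ (a₁/a₂) * (1 - a₁/a₂)⁻¹ := by
    calc ∑ t ∈ Finset.range n, wt β a₁ a₂ (a₂-a₁) t *
        ((Kc β a₁ a₂ (a₂-a₁) (n-1-t) : ℝ)/β^(n-1-t))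
        ≤ ∑ t ∈ Finset.range n, wt β a₁ a₂ (a₂-a₁) t * (1 - a₁/a₂)⁻¹ := by
          refine Finset.sum_le_sum fun t ht => ?_
          refine mul_le_mul_of_nonneg_left ?_ (wt_nonneg h _ t)
          exact ih _ (by have := Finset.mem_range.1 ht; omega)
      _ = (∑ t ∈ Finset.range n, wt β a₁ a₂ (a₂-a₁) t) * (1 - a₁/a₂)⁻¹ := by
          rw [Finset.sum_mul]
      _ ≤ (a₁/a₂) * (1 - a₁/a₂)⁻¹ :=
          mul_le_mul_of_nonneg_right (weight_head h n ha) hC0.le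
  have hpow : ((β:ℝ)^n)⁻¹ ≤ 1 := inv_le_one_of_one_le₀ (one_le_pow₀ h.hβ.le)
  have hCeq : 1 + (a₁/a₂) * (1 - a₁/a₂)⁻¹ = (1 - a₁/a₂)⁻¹ := by
    have hne : (1 - a₁/a₂) ≠ 0 := ne_of_gt (by linarith)
    have hx := inv_mul_cancel₀ hne
    nlinarith [hx]
  linarith [hrec]

lemma improve {c : ℝ} (hc : c ∈ Set.Icc 0 a₁) {V ε : ℝ} (hV0 : 0 ≤ V) (hε : 0 < ε)
    (hU : ∃ N, ∀ n ≥ N, (Kc β a₁ a₂ (a₂-a₁) n : ℝ)/β^n ≤ V) :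
    ∃ N', ∀ n ≥ N', (Kc β a₁ a₂ c n : ℝ)/β^n ≤ (a₁/a₂)*V + ε := by
  obtain ⟨N, hN⟩ := hU
  have hβ0 := h.hβ0
  have hs1 : a₁/a₂ < 1 := (div_lt_one h.ha2).2 h.h12
  have hs0 : 0 ≤ a₁/a₂ := div_nonneg h.h1.le h.ha2.le
  set C := (1 - a₁/a₂)⁻¹ with hCdef
  have hC0 : (0:ℝ) < C := inv_pos.2 (by linarith)
  have hβi0 : (0:ℝ) ≤ β⁻¹ := inv_nonneg.2 hβ0.le
  have hβi1 : (β⁻¹:ℝ) < 1 := inv_lt_one_of_one_lt₀ h.hβ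
  obtain ⟨k, hk⟩ := exists_pow_lt_of_lt_one (show (0:ℝ) < ε/(2*(C+1)) by positivity) hβi1
  obtain ⟨k2, hk2⟩ := exists_pow_lt_of_lt_one (half_pos hε) hβi1
  refine ⟨max (N + k + 1) k2, fun n hn => ?_⟩
  have hn1 : N + k + 1 ≤ n := le_trans (le_max_left _ _) hn
  have hn2 : k2 ≤ n := le_trans (le_max_right _ _) hn
  have hrec := recR h hc n
  have hsplit : ∑ t ∈ Finset.range n, wt β a₁ a₂ c t *
        ((Kc β a₁ a₂ (a₂-a₁) (n-1-t) : ℝ)/β^(n-1-t))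
      = (∑ t ∈ Finset.Ico 0 k, wt β a₁ a₂ c t * ((Kc β a₁ a₂ (a₂-a₁) (n-1-t) : ℝ)/β^(n-1-t)))
      + ∑ t ∈ Finset.Ico k n, wt β a₁ a₂ c t * ((Kc β a₁ a₂ (a₂-a₁) (n-1-t) : ℝ)/β^(n-1-t)) := by
    rw [Finset.range_eq_Ico, ← Finset.sum_Ico_consecutive _ (Nat.zero_le k) (by omega)]
  have hhead : ∑ t ∈ Finset.Ico 0 k, wt β a₁ a₂ c t *
        ((Kc β a₁ a₂ (a₂-a₁) (n-1-t) : ℝ)/β^(n-1-t)) ≤ (a₁/a₂) * V := by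
    calc ∑ t ∈ Finset.Ico 0 k, wt β a₁ a₂ c t *
        ((Kc β a₁ a₂ (a₂-a₁) (n-1-t) : ℝ)/β^(n-1-t))
        ≤ ∑ t ∈ Finset.Ico 0 k, wt β a₁ a₂ c t * V := by
          refine Finset.sum_le_sum fun t ht => ?_
          refine mul_le_mul_of_nonneg_left ?_ (wt_nonneg h _ t)
          refine hN _ ?_
          have := (Finset.mem_Ico.1 ht).2
          omega
      _ = (∑ t ∈ Finset.Ico 0 k, wt β a₁ a₂ c t) * V := by rw [Finset.sum_mul]
      _ ≤ (a₁/a₂) * V := by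
          refine mul_le_mul_of_nonneg_right ?_ hV0
          rw [← Finset.range_eq_Ico]
          exact weight_head h k hc
  have htail : ∑ t ∈ Finset.Ico k n, wt β a₁ a₂ c t *
        ((Kc β a₁ a₂ (a₂-a₁) (n-1-t) : ℝ)/β^(n-1-t)) ≤ ε/2 := by
    have h1 : ∑ t ∈ Finset.Ico k n, wt β a₁ a₂ c t *
          ((Kc β a₁ a₂ (a₂-a₁) (n-1-t) : ℝ)/β^(n-1-t))
        ≤ (∑ t ∈ Finset.Ico k n, wt β a₁ a₂ c t) * C := by
      rw [Finset.sum_mul]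
      exact Finset.sum_le_sum fun t ht =>
        mul_le_mul_of_nonneg_left (U_bound h _) (wt_nonneg h _ t)
    have h2 := weight_tail h hc k n
    have h4 : (∑ t ∈ Finset.Ico k n, wt β a₁ a₂ c t) * C ≤ ((β:ℝ)^k)⁻¹ * (a₁/a₂) * C :=
      mul_le_mul_of_nonneg_right h2 hC0.le
    have h5 : ((β:ℝ)^k)⁻¹ * (a₁/a₂) * C ≤ (β⁻¹:ℝ)^k * (C+1) := by
      rw [← inv_pow]
      have hq : (a₁/a₂) * C ≤ C + 1 := by nlinarith
      have := mul_le_mul_of_nonneg_left hq (pow_nonneg hβi0 k)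
      calc ((β:ℝ)⁻¹)^k * (a₁/a₂) * C = ((β:ℝ)⁻¹)^k * ((a₁/a₂) * C) := by ring
        _ ≤ ((β:ℝ)⁻¹)^k * (C+1) := this
    have h6 : (β⁻¹:ℝ)^k * (C+1) < ε/2 := by
      have hlt := mul_lt_mul_of_pos_right hk (show (0:ℝ) < C+1 by linarith)
      have he : ε/(2*(C+1)) * (C+1) = ε/2 := by field_simp
      linarith [he ▸ hlt]
    linarith
  have hpowsmall : ((β:ℝ)^n)⁻¹ ≤ ε/2 := by
    rw [← inv_pow]
    calc (β⁻¹:ℝ)^n ≤ (β⁻¹)^k2 := pow_le_pow_of_le_one hβi0 hβi1.le hn2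
      _ ≤ ε/2 := hk2.le
  rw [hsplit] at hrec
  linarith

lemma U_tendsto : ∀ ε > 0, ∃ N, ∀ n ≥ N, (Kc β a₁ a₂ (a₂-a₁) n : ℝ)/β^n ≤ ε := by
  intro ε hε
  have hs1 : a₁/a₂ < 1 := (div_lt_one h.ha2).2 h.h12
  have hs0 : 0 ≤ a₁/a₂ := div_nonneg h.h1.le h.ha2.le
  set C := (1 - a₁/a₂)⁻¹ with hCdef
  have hC0 : (0:ℝ) < C := inv_pos.2 (by linarith)
  have ha : (a₂ - a₁) ∈ Set.Icc 0 a₁ := ⟨by linarith [h.h12], by linarith [h.h2]⟩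
  have hiter : ∀ j : ℕ, ∃ N, ∀ n ≥ N,
      (Kc β a₁ a₂ (a₂-a₁) n : ℝ)/β^n ≤ (a₁/a₂)^j * C + ε/2 := by
    intro j
    induction j with
    | zero =>
      exact ⟨0, fun n _ => le_trans (U_bound h n) (by rw [pow_zero, one_mul]; linarith)⟩
    | succ j ihj =>
      have hV0 : (0:ℝ) ≤ (a₁/a₂)^j * C + ε/2 := by
        have := mul_nonneg (pow_nonneg hs0 j) hC0.le
        linarith
      have hδ : (0:ℝ) < (1 - a₁/a₂)*(ε/2) := mul_pos (by linarith) (by linarith)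
      obtain ⟨N', hN'⟩ := improve h ha hV0 hδ ihj
      refine ⟨N', fun n hn => le_trans (hN' n hn) (le_of_eq ?_)⟩
      ring
  obtain ⟨j, hj⟩ := exists_pow_lt_of_lt_one
    (show (0:ℝ) < ε/(2*(C+1)) by positivity) hs1
  obtain ⟨N, hN⟩ := hiter j
  refine ⟨N, fun n hn => le_trans (hN n hn) ?_⟩
  have hlt := mul_lt_mul_of_pos_right hj (show (0:ℝ) < C+1 by linarith)
  have he : ε/(2*(C+1)) * (C+1) = ε/2 := by field_simp
  have hmono : (a₁/a₂)^j * C ≤ (a₁/a₂)^j * (C+1) := by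
    have := pow_nonneg hs0 j
    nlinarith
  linarith [he ▸ hlt]

lemma main_tendsto :
    Filter.Tendsto (fun n : ℕ => (Kc β a₁ a₂ a₁ n : ℝ)/β^n) Filter.atTop (nhds 0) := by
  have hβ0 := h.hβ0
  rw [Metric.tendsto_atTop]
  intro ε hε
  have hc : a₁ ∈ Set.Icc 0 a₁ := ⟨h.h1.le, le_rfl⟩
  have hs1 : a₁/a₂ < 1 := (div_lt_one h.ha2).2 h.h12
  have hs0 : 0 ≤ a₁/a₂ := div_nonneg h.h1.le h.ha2.le
  obtain ⟨N0, hN0⟩ := U_tendsto h (ε/4) (by linarith)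
  obtain ⟨N, hN⟩ := improve h hc (show (0:ℝ) ≤ ε/4 by linarith)
    (show (0:ℝ) < ε/4 by linarith) ⟨N0, hN0⟩
  refine ⟨N, fun n hn => ?_⟩
  have hb := hN n hn
  have hnn : (0:ℝ) ≤ (Kc β a₁ a₂ a₁ n : ℝ)/β^n := by positivity
  rw [Real.dist_eq, sub_zero, abs_of_nonneg hnn]
  nlinarith

end endgame

section bridge

lemma digit_sub (h : Gd β a₁ a₂) (b : ℝ) : digitInt β a₁ a₂ b ⊆ Set.Ico 0 a₁ := by
  have hβ0 := h.hβ0; have h1 := h.h1; have hb := h.hb; have h2 := h.ha2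
  rw [digitInt]
  split_ifs
  · exact Set.Ico_subset_Ico le_rfl (div_le_self h1.le h.hβ.le)
  · refine Set.Ico_subset_Ico (div_nonneg h1.le hβ0.le) ?_
    rw [div_le_iff₀ hβ0]; nlinarith
  · exact Set.Ico_subset_Ico (div_nonneg h2.le hβ0.le) le_rfl

lemma cyl_eq (h : Gd β a₁ a₂) {w : List ℝ} (hne : w ≠ []) :
    cyl β a₁ a₂ w = cylc β a₁ a₂ a₁ w := by
  have hsub : cyl β a₁ a₂ w ⊆ Set.Ico 0 a₁ := by
    intro x hx
    have h0 : 0 < w.length := List.length_pos_iff.2 hne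
    have hx0 : x ∈ digitInt β a₁ a₂ (w.getD 0 0) := by
      have := Set.mem_iInter₂.1 hx 0 (by simpa using h0)
      simpa using this
    exact digit_sub h _ hx0
  unfold cylc
  exact (Set.inter_eq_right.2 hsub).symm

lemma memB_iff (h : Gd β a₁ a₂) (n : ℕ) (w : List ℝ) :
    memB β a₁ a₂ n w ↔ memC β a₁ a₂ a₁ n w := by
  constructor
  · rintro ⟨hl, hword, hpos, hnf, hpre⟩
    by_cases hne : w = []
    · subst hne
      refine ⟨hl, hword, ?_, ?_⟩
      · rw [cylc_nil, Real.volume_Ico, sub_zero]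
        exact ENNReal.ofReal_pos.2 h.h1
      · intro w' h1' h2' _
        exact h1' (List.prefix_nil.1 h2')
    · refine ⟨hl, hword, by rw [← cyl_eq h hne]; exact hpos, ?_⟩
      intro w' h1' h2' hfull
      have hcy : volume (cyl β a₁ a₂ w') = ENNReal.ofReal (a₁/β^w'.length) := by
        rw [cyl_eq h h1']; exact hfull
      by_cases hww : w' = w
      · exact hnf (by subst hww; exact hcy)
      · exact hpre w' h1' h2' hww hcy
  · rintro ⟨hl, hword, hpos, hpre⟩
    by_cases hne : w = []
    · subst hne
      have huniv : cyl β a₁ a₂ [] = Set.univ := by simp [cyl]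
      refine ⟨hl, hword, ?_, ?_, ?_⟩
      · rw [huniv, Real.volume_univ]
        exact ENNReal.zero_lt_top
      · intro hfull
        unfold isFull at hfull
        rw [huniv, Real.volume_univ] at hfull
        exact ENNReal.ofReal_ne_top hfull.symm
      · intro w' hw1 hw2 _
        exact absurd (List.prefix_nil.1 hw2) hw1
    · refine ⟨hl, hword, by rw [cyl_eq h hne]; exact hpos, ?_, ?_⟩
      · intro hfull
        unfold isFull at hfull
        rw [cyl_eq h hne] at hfull
        exact hpre w hne (List.prefix_refl w) hfull
      · intro w' hw1 hw2 _ hfull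
        unfold isFull at hfull
        rw [cyl_eq h hw1] at hfull
        exact hpre w' hw1 hw2 hfull

lemma kappa_eq (h : Gd β a₁ a₂) (n : ℕ) : kappa β a₁ a₂ n = Kc β a₁ a₂ a₁ n := by
  unfold kappa Kc
  congr 1
  ext w
  exact memB_iff h n w

end bridge

end Aux9

/-- The sequence `κ(n)/βⁿ` tends to `0` as `n → ∞`. -/
theorem stmt9 (β a₁ a₂ : ℝ) (hβ1 : 1 < β) (hβ3 : β < 3)
    (ha₁ : 0 < a₁) (h12 : a₁ < a₂) (hc : condition6 β a₁ a₂) :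
    Filter.Tendsto (fun n : ℕ => (kappa β a₁ a₂ n : ℝ) / β ^ n)
      Filter.atTop (nhds 0) := by
  have h : Aux9.Gd β a₁ a₂ := by
    have hm2 : a₁ * min 2 β ≤ 2 * a₁ := by nlinarith [min_le_left (2:ℝ) β]
    have hmb : a₁ * min 2 β ≤ β * a₁ := by nlinarith [min_le_right (2:ℝ) β]
    have hb1 : a₁ * (β - 1) ≤ a₁ * max (β-1) 1 := by nlinarith [le_max_left (β-1) (1:ℝ)]
    exact ⟨hβ1, ha₁, h12, lt_of_lt_of_le hc.2 hm2, lt_of_lt_of_le hc.2 hmb,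
      lt_of_le_of_lt hb1 hc.1⟩
  have hmain := Aux9.main_tendsto h
  have hfun : (fun n : ℕ => (kappa β a₁ a₂ n : ℝ) / β ^ n)
      = fun n : ℕ => (Aux9.Kc β a₁ a₂ a₁ n : ℝ) / β ^ n := by
    funext n
    rw [Aux9.kappa_eq h]
  rw [hfun]
  exact hmain
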